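/- Let H be a nonempty, monotone, regular subset of L⁰₊. Then H° = (H ∩ C_b)°, i.e. a finite positive Borel measure μ satisfies ⟨f,μ⟩ ≤ 1 for all f ∈ H if and only if it satisfies ⟨f,μ⟩ ≤ 1 for all bounded continuous f ∈ H. -/

import Mathlib

open MeasureTheory Filter ENNReal NNReal

section Defs

variable {Ω : Type*} [TopologicalSpace Ω] [MeasurableSpace Ω]

/-- The polar of a set `H` of `[0,∞]`-valued Borel functions: all finite positive Borel
measures `μ` with `⟨f,μ⟩ = ∫ f dμ ≤ 1` for every `f ∈ H`. -/
def polar (H : Set (Ω → ℝ≥0∞)) : Set (Measure Ω) :=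
  {μ | IsFiniteMeasure μ ∧ ∀ f ∈ H, ∫⁻ x, f x ∂μ ≤ 1}

/-- The bipolar of a set `H` of `[0,∞]`-valued Borel functions. -/
def bipolar (H : Set (Ω → ℝ≥0∞)) : Set (Ω → ℝ≥0∞) :=
  {f | Measurable f ∧ ∀ μ ∈ polar H, ∫⁻ x, f x ∂μ ≤ 1}

/-- `h` is (the coercion of) a bounded continuous real-valued function. -/
def IsCb (h : Ω → ℝ≥0∞) : Prop :=
  Continuous h ∧ ∃ C : ℝ≥0, ∀ x, h x ≤ C

/-- `h` is (the coercion of) a bounded upper semicontinuous real-valued function. -/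
def IsUb (h : Ω → ℝ≥0∞) : Prop :=
  UpperSemicontinuous h ∧ ∃ C : ℝ≥0, ∀ x, h x ≤ C

/-- `H` is monotone: any nonnegative Borel function dominated by an element of `H`
belongs to `H`. -/
def MonotoneSet (H : Set (Ω → ℝ≥0∞)) : Prop :=
  ∀ f : Ω → ℝ≥0∞, Measurable f → (∃ h ∈ H, ∀ x, f x ≤ h x) → f ∈ H

/-- `H` is regular: for every finite positive Borel measure `μ`, the supremum of `⟨h,μ⟩`
over `H ∩ U_b` equals the supremum over `H ∩ C_b`. -/
def RegularSet (H : Set (Ω → ℝ≥0∞)) : Prop :=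
  ∀ μ : Measure Ω, IsFiniteMeasure μ →
    sSup {x : ℝ≥0∞ | ∃ h ∈ H, IsUb h ∧ x = ∫⁻ ω, h ω ∂μ} =
      sSup {x : ℝ≥0∞ | ∃ h ∈ H, IsCb h ∧ x = ∫⁻ ω, h ω ∂μ}

/-- `H` is closed under `liminf`: the pointwise `liminf` of any sequence in `H` is in `H`. -/
def LiminfClosed (H : Set (Ω → ℝ≥0∞)) : Prop :=
  ∀ h : ℕ → Ω → ℝ≥0∞, (∀ n, h n ∈ H) →
    (fun x => liminf (fun n => h n x) atTop) ∈ H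

/-- `H` is convex. -/
def ConvexSet (H : Set (Ω → ℝ≥0∞)) : Prop :=
  ∀ f ∈ H, ∀ g ∈ H, ∀ t : ℝ≥0∞, t ≤ 1 →
    (fun x => t * f x + (1 - t) * g x) ∈ H

end Defs

/-- **Corollary 1.2** in Bartl–Kupper, "A pointwise bipolar theorem": under the
assumptions of the pointwise bipolar theorem, the polar of `H` coincides with the polar of
`H ∩ C_b`: a finite positive Borel measure `μ` satisfies `⟨f,μ⟩ ≤ 1` for all `f ∈ H` if and
only if it satisfies `⟨f,μ⟩ ≤ 1` for all bounded continuous `f ∈ H`. -/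
theorem polar_eq_polar_inter_Cb
    {Ω : Type*} [MetricSpace Ω] [SigmaCompactSpace Ω]
    [MeasurableSpace Ω] [BorelSpace Ω]
    (H : Set (Ω → ℝ≥0∞)) (hmeas : ∀ f ∈ H, Measurable f)
    (hne : H.Nonempty) (hmono : MonotoneSet H) (hreg : RegularSet H) :
    polar H = polar {h ∈ H | IsCb h} := by
  ext μ
  constructor
  · rintro ⟨hfin, hint⟩
    exact ⟨hfin, fun f hf => hint f hf.1⟩
  · rintro ⟨hfin, hint⟩
    haveI := hfin
    refine ⟨hfin, fun f hf => ?_⟩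
    have hfm := hmeas f hf
    have hCb : sSup {x : ℝ≥0∞ | ∃ h ∈ H, IsCb h ∧ x = ∫⁻ ω, h ω ∂μ} ≤ 1 := by
      apply sSup_le
      rintro x ⟨h, hh, hcb, rfl⟩
      exact hint h ⟨hh, hcb⟩
    have hUb : sSup {x : ℝ≥0∞ | ∃ h ∈ H, IsUb h ∧ x = ∫⁻ ω, h ω ∂μ} ≤ 1 :=
      (hreg μ hfin).le.trans hCb
    have key : ∀ N : ℕ, ∫⁻ x, min (f x) N ∂μ ≤ 1 := by
      intro N
      set fN : Ω → ℝ≥0 := fun x => (min (f x) N).toNNReal with hfN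
      have hcoe : ∀ x, (fN x : ℝ≥0∞) = min (f x) N := fun x =>
        ENNReal.coe_toNNReal (ne_top_of_le_ne_top (ENNReal.natCast_ne_top N) (min_le_right _ _))
      have hint_ne : ∫⁻ x, fN x ∂μ ≠ ∞ := by
        refine ne_top_of_le_ne_top
          (ENNReal.mul_ne_top (ENNReal.natCast_ne_top N) (measure_ne_top μ Set.univ)) ?_
        rw [← lintegral_const]
        exact lintegral_mono fun x => (hcoe x).le.trans (min_le_right _ _)
      have hstep : ∀ ε : ℝ≥0∞, ε ≠ 0 → ∫⁻ x, min (f x) N ∂μ ≤ 1 + ε := by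
        intro ε hε
        obtain ⟨g, hgle, hgusc, hgint⟩ :=
          exists_upperSemicontinuous_le_lintegral_le (μ := μ) fN hint_ne hε
        have hgH : (fun x => (g x : ℝ≥0∞)) ∈ H := by
          refine hmono _ (measurable_coe_nnreal_ennreal.comp hgusc.measurable) ⟨f, hf, fun x => ?_⟩
          calc (g x : ℝ≥0∞) ≤ fN x := ENNReal.coe_le_coe.2 (hgle x)
          _ = min (f x) N := hcoe x
          _ ≤ f x := min_le_left _ _
        have hgUb : IsUb (fun x => (g x : ℝ≥0∞)) := by
          refine ⟨?_, ⟨N, fun x => ?_⟩⟩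
          · exact continuous_coe.comp_upperSemicontinuous hgusc
              (fun a b hab => ENNReal.coe_le_coe.2 hab)
          · calc (g x : ℝ≥0∞) ≤ fN x := ENNReal.coe_le_coe.2 (hgle x)
            _ ≤ N := (hcoe x).le.trans (min_le_right _ _)
            _ = ((N : ℝ≥0) : ℝ≥0∞) := by simp
        have hg1 : ∫⁻ x, (g x : ℝ≥0∞) ∂μ ≤ 1 := by
          refine le_trans (le_sSup ?_) hUb
          exact ⟨_, hgH, hgUb, rfl⟩
        calc ∫⁻ x, min (f x) N ∂μ = ∫⁻ x, (fN x : ℝ≥0∞) ∂μ := by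
              simp_rw [hcoe]
          _ ≤ (∫⁻ x, (g x : ℝ≥0∞) ∂μ) + ε := hgint
          _ ≤ 1 + ε := add_le_add_left hg1 ε
      refine ENNReal.le_of_forall_pos_le_add fun ε hε _ => hstep ε ?_
      exact_mod_cast hε.ne'
    have hmonoN : Monotone fun N : ℕ => fun x => min (f x) N := by
      intro a b hab x
      exact min_le_min le_rfl (by exact_mod_cast Nat.cast_le.2 hab)
    have hsup : ∀ x, ⨆ N : ℕ, min (f x) N = f x := by
      intro x
      apply le_antisymm (iSup_le fun N => min_le_left _ _)
      rcases eq_or_ne (f x) ∞ with h | h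
      · rw [h]
        have : (⨆ N : ℕ, min (⊤ : ℝ≥0∞) N) = ⨆ N : ℕ, (N : ℝ≥0∞) :=
          iSup_congr fun N => min_eq_right le_top
        rw [this, ENNReal.iSup_natCast]
      · obtain ⟨N, hN⟩ := exists_nat_ge (f x).toNNReal
        refine le_trans ?_ (le_iSup _ N)
        rw [min_eq_left]
        rw [← ENNReal.coe_toNNReal h]
        exact_mod_cast hN
    calc ∫⁻ x, f x ∂μ = ∫⁻ x, ⨆ N : ℕ, min (f x) N ∂μ := by simp_rw [hsup]
      _ = ⨆ N : ℕ, ∫⁻ x, min (f x) N ∂μ :=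
          lintegral_iSup (fun N => hfm.min measurable_const) (fun a b hab x => hmonoN hab x)
      _ ≤ 1 := iSup_le key
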